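/- Let Y be a real random variable on a probability space, let a₀ ≤ τ be reals, and let w : [a₀, τ] → [0, ∞) be measurable. Then E[ ( ∫_{a₀}^{τ} 1{Y ≥ t}·w(t) dt )² ] = 2·∫_{a₀}^{τ} ∫_{a₀}^{t} P(Y ≥ t)·w(s)·w(t) ds dt. -/

import Mathlib

open MeasureTheory
open scoped ENNReal

/-- Second moment of a weighted occupation integral: for a real random variable
`Y`, reals `a₀ ≤ τ` and a measurable weight `w : [a₀, τ] → [0, ∞)`,
`E[(∫_{a₀}^{τ} 1{Y ≥ t}·w(t) dt)²]
  = 2·∫_{a₀}^{τ} ∫_{a₀}^{t} P(Y ≥ t)·w(s)·w(t) ds dt`,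
with both sides allowed to be infinite. -/
theorem stmt_14 {Ω : Type*} [MeasurableSpace Ω] (P : Measure Ω) [IsProbabilityMeasure P]
    (Y : Ω → ℝ) (hY : Measurable Y) (a₀ τ : ℝ) (ha : a₀ ≤ τ)
    (w : ℝ → ℝ) (hw : Measurable w) (hw0 : ∀ t, 0 ≤ w t) :
    ∫⁻ ω, (∫⁻ t in Set.Icc a₀ τ, (if t ≤ Y ω then ENNReal.ofReal (w t) else 0)) ^ 2 ∂P
      = 2 * ∫⁻ t in Set.Icc a₀ τ, ∫⁻ s in Set.Icc a₀ t,
          P {ω | t ≤ Y ω} * ENNReal.ofReal (w s) * ENNReal.ofReal (w t) := by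
  classical
  set I : Set ℝ := Set.Icc a₀ τ with hIdef
  set W : ℝ → ℝ≥0∞ := fun t => ENNReal.ofReal (w t) with hWdef
  have hW : Measurable W := ENNReal.measurable_ofReal.comp hw
  set φ : ℝ → ℝ≥0∞ := fun u => P {ω | u ≤ Y ω} with hφdef
  have hφanti : Antitone φ := fun u v huv =>
    measure_mono fun ω h => le_trans huv h
  have hφ : Measurable φ := hφanti.measurable
  set f : ℝ → Ω → ℝ≥0∞ := fun t ω => if t ≤ Y ω then W t else 0 with hfdef
  have hf : Measurable fun p : ℝ × Ω => f p.1 p.2 := by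
    apply Measurable.ite
    · exact measurableSet_le measurable_fst (hY.comp measurable_snd)
    · exact hW.comp measurable_fst
    · exact measurable_const
  have hfω : ∀ ω, Measurable fun t => f t ω := fun ω =>
    hf.comp (measurable_id.prodMk measurable_const)
  have hft : ∀ t, Measurable fun ω => f t ω := fun t =>
    hf.comp (measurable_const.prodMk measurable_id)
  set G : ℝ → ℝ → ℝ≥0∞ := fun t s => φ (max s t) * W s * W t with hGdef
  have hGsymm : ∀ t s, G s t = G t s := by
    intro t s
    simp only [hGdef, max_comm]
    ring
  have hG : Measurable fun p : ℝ × ℝ => G p.1 p.2 :=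
    (((hφ.comp (measurable_snd.max measurable_fst)).mul
      (hW.comp measurable_snd)).mul (hW.comp measurable_fst))
  -- step 1: pointwise identity for the square
  have step1 : ∀ ω, (∫⁻ t in I, f t ω) ^ 2 = ∫⁻ t in I, ∫⁻ s in I, f t ω * f s ω := by
    intro ω
    rw [sq, ← lintegral_mul_const _ (hfω ω)]
    exact lintegral_congr fun t => (lintegral_const_mul _ (hfω ω)).symm
  -- step 2: Tonelli swaps to get a double set integral
  have hker : Measurable fun q : (Ω × ℝ) × ℝ => f q.1.2 q.1.1 * f q.2 q.1.1 :=
    (hf.comp (measurable_fst.snd.prodMk measurable_fst.fst)).mul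
      (hf.comp (measurable_snd.prodMk measurable_fst.fst))
  have inner_eq : ∀ t s : ℝ, ∫⁻ ω, f t ω * f s ω ∂P = G t s := by
    intro t s
    have hpt : ∀ ω, f t ω * f s ω
        = Set.indicator {ω | max s t ≤ Y ω} (fun _ => W t * W s) ω := by
      intro ω
      simp only [hfdef, Set.indicator_apply, Set.mem_setOf_eq, max_le_iff]
      by_cases h1 : t ≤ Y ω <;> by_cases h2 : s ≤ Y ω <;> simp [h1, h2]
    rw [lintegral_congr hpt, lintegral_indicator_const
      (show MeasurableSet {ω | max s t ≤ Y ω} from hY measurableSet_Ici)]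
    simp only [hGdef, hφdef]
    have : (Y ⁻¹' Set.Ici (max s t)) = {ω | max s t ≤ Y ω} := rfl
    ring
  have step2 : (∫⁻ ω, (∫⁻ t in I, f t ω) ^ 2 ∂P)
      = ∫⁻ t in I, ∫⁻ s in I, G t s := by
    calc ∫⁻ ω, (∫⁻ t in I, f t ω) ^ 2 ∂P
        = ∫⁻ ω, (∫⁻ t in I, ∫⁻ s in I, f t ω * f s ω) ∂P :=
          lintegral_congr fun ω => step1 ω
      _ = ∫⁻ t in I, ∫⁻ ω, (∫⁻ s in I, f t ω * f s ω) ∂P := by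
          apply lintegral_lintegral_swap
          exact (hker.lintegral_prod_right').aemeasurable
      _ = ∫⁻ t in I, ∫⁻ s in I, ∫⁻ ω, f t ω * f s ω ∂P := by
          refine lintegral_congr fun t => ?_
          apply lintegral_lintegral_swap
          exact (((hft t).comp measurable_fst).mul
            (hf.comp (measurable_snd.prodMk measurable_fst))).aemeasurable
      _ = ∫⁻ t in I, ∫⁻ s in I, G t s :=
          lintegral_congr fun t => lintegral_congr fun s => inner_eq t s
  -- split the double integral into lower and upper triangles
  set h₁ : ℝ × ℝ → ℝ≥0∞ := fun p => if p.2 ≤ p.1 then G p.1 p.2 else 0 with h₁def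
  set h₂ : ℝ × ℝ → ℝ≥0∞ := fun p => if p.1 < p.2 then G p.1 p.2 else 0 with h₂def
  have hh₁ : Measurable h₁ :=
    Measurable.ite (measurableSet_le measurable_snd measurable_fst) hG measurable_const
  have hh₂ : Measurable h₂ :=
    Measurable.ite (measurableSet_lt measurable_fst measurable_snd) hG measurable_const
  have hsplit : ∀ t s : ℝ, G t s = h₁ (t, s) + h₂ (t, s) := by
    intro t s
    simp only [h₁def, h₂def]
    rcases le_or_gt s t with h | h
    · simp [h, not_lt.2 h]
    · simp [h, not_le.2 h]
  have step3 : (∫⁻ t in I, ∫⁻ s in I, G t s)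
      = (∫⁻ t in I, ∫⁻ s in I, h₁ (t, s)) + ∫⁻ t in I, ∫⁻ s in I, h₂ (t, s) := by
    calc ∫⁻ t in I, ∫⁻ s in I, G t s
        = ∫⁻ t in I, ((∫⁻ s in I, h₁ (t, s)) + ∫⁻ s in I, h₂ (t, s)) := by
          refine lintegral_congr fun t => ?_
          rw [lintegral_congr fun s => hsplit t s]
          exact lintegral_add_left (hh₁.comp (measurable_const.prodMk measurable_id)) _
      _ = _ := lintegral_add_left hh₁.lintegral_prod_right' _
  -- the lower triangle equals the RHS inner double integral
  have lower_eq : (∫⁻ t in I, ∫⁻ s in I, h₁ (t, s))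
      = ∫⁻ t in I, ∫⁻ s in Set.Icc a₀ t, φ t * W s * W t := by
    refine setLIntegral_congr_fun measurableSet_Icc ?_
    intro t ht
    have hIic : Set.Iic t ∩ I = Set.Icc a₀ t := by
      ext s
      simp only [Set.mem_inter_iff, Set.mem_Iic, hIdef, Set.mem_Icc]
      constructor
      · rintro ⟨h1, h2, _⟩; exact ⟨h2, h1⟩
      · rintro ⟨h1, h2⟩; exact ⟨h2, h1, h2.trans ht.2⟩
    have : ∀ s, h₁ (t, s) = Set.indicator (Set.Iic t) (fun s => G t s) s := by
      intro s
      simp only [h₁def, Set.indicator_apply, Set.mem_Iic]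
    calc ∫⁻ s in I, h₁ (t, s)
        = ∫⁻ s in I, Set.indicator (Set.Iic t) (fun s => G t s) s :=
          lintegral_congr fun s => this s
      _ = ∫⁻ s in Set.Iic t, G t s ∂(volume.restrict I) :=
          lintegral_indicator measurableSet_Iic _
      _ = ∫⁻ s in Set.Icc a₀ t, G t s := by
          rw [Measure.restrict_restrict measurableSet_Iic, hIic]
      _ = ∫⁻ s in Set.Icc a₀ t, φ t * W s * W t := by
          refine setLIntegral_congr_fun measurableSet_Icc
            (fun s hs => ?_)
          simp only [hGdef, max_eq_right hs.2]
  -- the upper triangle equals the lower triangle, by swapping variables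
  have upper_eq : (∫⁻ t in I, ∫⁻ s in I, h₂ (t, s))
      = ∫⁻ t in I, ∫⁻ s in I, h₁ (t, s) := by
    have swap : (∫⁻ t in I, ∫⁻ s in I, h₂ (t, s))
        = ∫⁻ s in I, ∫⁻ t in I, h₂ (t, s) := by
      apply lintegral_lintegral_swap
      exact hh₂.aemeasurable
    rw [swap]
    refine lintegral_congr fun t => ?_
    -- now: ∫⁻ s in I, h₂ (s, t) = ∫⁻ s in I, h₁ (t, s)
    have key : ∀ s, s ≠ t → h₂ (s, t) = h₁ (t, s) := by
      intro s hst
      simp only [h₂def, h₁def]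
      rcases lt_or_ge s t with h | h
      · rw [if_pos h, if_pos h.le, hGsymm]
      · rw [if_neg (not_lt.2 h), if_neg fun hle => hst (le_antisymm hle h)]
    have hae : (fun s => h₂ (s, t)) =ᵐ[volume.restrict I] fun s => h₁ (t, s) := by
      refine ae_restrict_of_ae ?_
      have h0 : (volume : Measure ℝ) {t} = 0 := Real.volume_singleton
      refine measure_mono_null (fun s hs => ?_) h0
      simp only [Set.mem_setOf_eq] at hs
      by_contra hst
      exact hs (key s hst)
    exact lintegral_congr_ae hae
  -- put everything together
  have : (∫⁻ ω, (∫⁻ t in I, f t ω) ^ 2 ∂P)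
      = 2 * ∫⁻ t in I, ∫⁻ s in Set.Icc a₀ t, φ t * W s * W t := by
    rw [step2, step3, upper_eq, lower_eq, ← two_mul]
  exact this
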